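/- arXiv:1211.6733 — 3 statements merged into one kernel-verified Lean document; each statement's English description precedes it below -/
import Mathlib

section
/- Let F_q be a finite field of q elements with q odd, and define f(x) = ∏_{α,β ∈ F_q} (x − αt − β) ∈ F_q[t][x]. Then for every a ∈ F_q[t], the polynomial f(a(t), t) ∈ F_q[t] is divisible by (t^q − t)^2; in particular f(a) is never square-free. -/
open Polynomial

/-- A polynomial in `F[t]` is square-free if it is not divisible by `P^2`
for any nonconstant `P ∈ F[t]`. -/
def IsSquarefreePoly {F : Type*} [Field F] (g : Polynomial F) : Prop :=
  ¬ ∃ P : Polynomial F, 0 < P.natDegree ∧ P ^ 2 ∣ g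

lemma prod_X_sub_C_univ (F : Type*) [Field F] [Fintype F] :
    ∏ x : F, (X - C x) = X ^ (Fintype.card F) - X := by
  classical
  have hmonic : (X ^ (Fintype.card F) - X : F[X]).Monic :=
    (monic_X_pow _).sub_of_left (by
      rw [degree_X, degree_X_pow]
      exact_mod_cast Fintype.one_lt_card)
  have hdeg : (X ^ (Fintype.card F) - X : F[X]).natDegree = Fintype.card F :=
    FiniteField.X_pow_card_sub_X_natDegree_eq F Fintype.one_lt_card
  have hroots : (X ^ (Fintype.card F) - X : F[X]).roots = Finset.univ.val :=
    FiniteField.roots_X_pow_card_sub_X F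
  have hcard : (X ^ (Fintype.card F) - X : F[X]).roots.card
      = (X ^ (Fintype.card F) - X : F[X]).natDegree := by
    rw [hroots, hdeg]; simp [Finset.card_univ]
  have := prod_multiset_X_sub_C_of_monic_of_roots_card_eq hmonic hcard
  rw [hroots] at this
  rw [← this]
  rfl

lemma dvd_pow_card_sub_self {F : Type*} [Field F] [Fintype F] (g : Polynomial F) :
    (X ^ (Fintype.card F) - X : Polynomial F) ∣ g ^ (Fintype.card F) - g := by
  have h := sub_dvd_eval_sub (X ^ (Fintype.card F)) (X : Polynomial F)
    (g.map (C : F →+* Polynomial F))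
  have h1 : (g.map (C : F →+* Polynomial F)).eval (X ^ (Fintype.card F))
      = g ^ (Fintype.card F) := by
    rw [eval_map]
    have : (g.eval₂ (C : F →+* Polynomial F) (X ^ (Fintype.card F)))
        = g.comp (X ^ (Fintype.card F)) := rfl
    rw [this, ← expand_eq_comp_X_pow, FiniteField.expand_card]
  have h2 : (g.map (C : F →+* Polynomial F)).eval X = g := by
    rw [eval_map]
    have : (g.eval₂ (C : F →+* Polynomial F) X) = g.comp X := rfl
    rw [this, comp_X]
  rwa [h1, h2] at h

/-- For `F_q` a finite field with `q` odd and
`f(x) = ∏_{α,β ∈ F_q} (x − (αt + β)) ∈ F_q[t][x]`, for every `a ∈ F_q[t]` the value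
`f(a(t),t)` is divisible by `(t^q − t)^2`; in particular it is never square-free. -/
theorem stmt_3 {F : Type*} [Field F] [Fintype F] (hq : Odd (Fintype.card F))
    (f : Polynomial (Polynomial F))
    (hf : f = ∏ α : F, ∏ β : F,
      (Polynomial.X - Polynomial.C (Polynomial.C α * Polynomial.X + Polynomial.C β)))
    (a : Polynomial F) :
    (Polynomial.X ^ (Fintype.card F) - Polynomial.X : Polynomial F) ^ 2 ∣ f.eval a ∧
      ¬ IsSquarefreePoly (f.eval a) := by
  classical
  set q := Fintype.card F with hqdef
  set D : Polynomial F := X ^ q - X with hD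
  have hfa : f.eval a = ∏ α : F, ((a - C α * X) ^ q - (a - C α * X)) := by
    rw [hf]
    rw [eval_prod]
    refine Finset.prod_congr rfl fun α _ => ?_
    rw [eval_prod]
    have key := congrArg (Polynomial.aeval (a - C α * X)) (prod_X_sub_C_univ F)
    simp only [map_prod, map_sub, map_pow, Polynomial.aeval_X, Polynomial.aeval_C] at key
    rw [← key]
    refine Finset.prod_congr rfl fun β _ => ?_
    simp [algebraMap_eq]
    ring
  have hdvd : D ^ 2 ∣ f.eval a := by
    have h1 : D ^ q ∣ f.eval a := by
      rw [hfa]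
      have : (D : Polynomial F) ^ q = ∏ _α : F, D := by
        simp [Finset.prod_const, Finset.card_univ]; rfl
      rw [this]
      exact Finset.prod_dvd_prod_of_dvd _ _ fun α _ => dvd_pow_card_sub_self _
    exact dvd_trans (pow_dvd_pow D Fintype.one_lt_card) h1
  refine ⟨hdvd, ?_⟩
  intro h
  exact h ⟨X, by simp, dvd_trans (pow_dvd_pow_of_dvd
    (dvd_sub (dvd_pow_self X (Nat.one_le_iff_ne_zero.mp Fintype.one_lt_card.le)) dvd_rfl) 2) hdvd⟩
end

section
/- Let F be an algebraically closed field, c ∈ F[t] monic with distinct roots α_1,…,α_k, and f_0(x,t) = Σ_j γ_j(t) x^j ∈ F[t][x] primitive. Regard R(a_0,…,a_{n−1}) = ∏_{i=1}^{k} f_0(a(α_i), α_i) as a polynomial in the coefficients a_0,…,a_{n−1} of the monic polynomial a(t) = a_0 + ⋯ + a_{n−1}t^{n−1} + t^n. Then R is not the zero polynomial, and its total degree equals L = Σ_i deg_x f_0(x, α_i) ≤ deg c · deg_x f_0; moreover the coefficient of a_0^L in R is ∏_i γ_{ℓ(α_i)}(α_i) ≠ 0, where ℓ(α_i) = deg_x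 f_0(x, α_i). -/
open Polynomial

/-- The generic monic polynomial `a(t) = a_0 + a_1 t + ⋯ + a_{n−1}t^{n−1} + t^n`,
evaluated at `t = α`, as a polynomial in the indeterminate coefficients `a_0,…,a_{n−1}`. -/
noncomputable def genEval {F : Type*} [Field F] (n : ℕ) (α : F) :
    MvPolynomial (Fin n) F :=
  MvPolynomial.C (α ^ n) + ∑ i : Fin n, MvPolynomial.C (α ^ (i : ℕ)) * MvPolynomial.X i

-- Lemma A : coefficient extraction via the specialization X z ↦ X, other ↦ 0.
lemma aux_coeff_aeval {F : Type*} [Field F] {n : ℕ} [DecidableEq (Fin n)] (z : Fin n)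
    (S : MvPolynomial (Fin n) F) (k : ℕ) :
    (MvPolynomial.aeval (fun i => if i = z then (Polynomial.X : F[X]) else 0) S).coeff k
      = S.coeff (Finsupp.single z k) := by
  induction S using MvPolynomial.induction_on' with
  | monomial u a =>
    rw [MvPolynomial.aeval_monomial, MvPolynomial.coeff_monomial]
    by_cases h : u = Finsupp.single z (u z)
    · rw [h, Finsupp.prod_single_index (by simp)]
      simp only [if_pos rfl, algebraMap_eq, coeff_C_mul, coeff_X_pow,
        Finsupp.single_eq_single_iff, true_and]
      by_cases hk : u z = k
      · subst hk; simp
      · have h2 : ¬(u z = k ∨ u z = 0 ∧ k = 0) := by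
          rintro (h' | ⟨h1, h2⟩)
          · exact hk h'
          · exact hk (h1.trans h2.symm)
        simp [Ne.symm hk, h2]
    · have : ∃ i, i ≠ z ∧ u i ≠ 0 := by
        by_contra hcon
        push_neg at hcon
        refine h (Finsupp.ext fun i => ?_)
        by_cases hi : i = z
        · simp [hi]
        · simp [hcon i hi, Finsupp.single_apply, Ne.symm hi]
      obtain ⟨i, hiz, hi⟩ := this
      have h0 : (u.prod fun i k => (if i = z then (Polynomial.X : F[X]) else 0) ^ k) = 0 := by
        apply Finset.prod_eq_zero (i := i) (Finsupp.mem_support_iff.2 hi)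
        simp [hiz, zero_pow hi]
      have hne : u ≠ Finsupp.single z k := by
        intro hu
        apply hi
        rw [hu]
        exact Finsupp.single_eq_of_ne' (Ne.symm hiz)
      simp [Finsupp.prod] at h0 ⊢
      simp [h0, hne]
  | add p q hp hq => simp [map_add, hp, hq]

-- Lemma B
lemma aux_totalDegree_aeval_le {F : Type*} [Field F] {σ : Type*} (g : MvPolynomial σ F)
    (p : F[X]) : (Polynomial.aeval g p).totalDegree ≤ p.natDegree * g.totalDegree := by
  rw [Polynomial.aeval_def, Polynomial.eval₂_eq_sum, Polynomial.sum_def]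
  refine (MvPolynomial.totalDegree_finset_sum _ _).trans (Finset.sup_le fun e he => ?_)
  calc (algebraMap F (MvPolynomial σ F) (p.coeff e) * g ^ e).totalDegree
      ≤ (algebraMap F (MvPolynomial σ F) (p.coeff e)).totalDegree + (g ^ e).totalDegree :=
        MvPolynomial.totalDegree_mul _ _
    _ ≤ 0 + e * g.totalDegree := by
        gcongr
        · exact le_of_eq (MvPolynomial.totalDegree_C _)
        · exact MvPolynomial.totalDegree_pow _ _
    _ ≤ p.natDegree * g.totalDegree := by
        rw [zero_add]
        exact Nat.mul_le_mul_right _ (Polynomial.le_natDegree_of_mem_supp _ he)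

lemma aux_totalDegree_genEval {F : Type*} [Field F] (n : ℕ) (α : F) :
    (genEval n α).totalDegree ≤ 1 := by
  unfold genEval
  refine (MvPolynomial.totalDegree_add _ _).trans (max_le (by simp [MvPolynomial.totalDegree_C, MvPolynomial.totalDegree_pow, (MvPolynomial.totalDegree_pow _ _).trans]) ?_)
  refine (MvPolynomial.totalDegree_finset_sum _ _).trans (Finset.sup_le fun i _ => ?_)
  refine (MvPolynomial.totalDegree_mul _ _).trans ?_
  have h0 : ∀ m : ℕ, (MvPolynomial.C α ^ m : MvPolynomial (Fin n) F).totalDegree = 0 :=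
    fun m => Nat.eq_zero_of_le_zero ((MvPolynomial.totalDegree_pow _ _).trans
      (by simp [MvPolynomial.totalDegree_C]))
  have h1 : ∀ m : ℕ, (MvPolynomial.C (α ^ m) : MvPolynomial (Fin n) F).totalDegree = 0 :=
    fun m => MvPolynomial.totalDegree_C _
  simp [h0, h1, MvPolynomial.totalDegree_X]

/-- Let `F` be algebraically closed, `c ∈ F[t]` monic with distinct roots, and
`f₀ ∈ F[t][x]` primitive. Then `R = ∏_{c(α)=0} f₀(a(α),α)`, as a polynomial in the
coefficients `a_0,…,a_{n−1}`, is nonzero of total degree `L = Σ deg_x f₀(x,α) ≤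
deg c · deg_x f₀`, and the coefficient of `a_0^L` is `∏ γ_{ℓ(α)}(α) ≠ 0`. -/
theorem stmt_12 {F : Type*} [Field F] [IsAlgClosed F] [DecidableEq F]
    (c : Polynomial F) (hc : c.Monic) (hnodup : c.roots.Nodup)
    (f₀ : Polynomial (Polynomial F))
    (hprim : ∀ d : Polynomial F, (∀ j, d ∣ f₀.coeff j) → IsUnit d)
    (n : ℕ) (hn : 0 < n)
    (R : MvPolynomial (Fin n) F)
    (hR : R = ∏ α ∈ c.roots.toFinset,
      Polynomial.aeval (genEval n α) (f₀.map (Polynomial.evalRingHom α)))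
    (L : ℕ)
    (hL : L = ∑ α ∈ c.roots.toFinset, (f₀.map (Polynomial.evalRingHom α)).natDegree) :
    R ≠ 0 ∧ R.totalDegree = L ∧ L ≤ c.natDegree * f₀.natDegree ∧
      MvPolynomial.coeff (Finsupp.single (⟨0, hn⟩ : Fin n) L) R =
        ∏ α ∈ c.roots.toFinset, (f₀.map (Polynomial.evalRingHom α)).leadingCoeff ∧
      (∏ α ∈ c.roots.toFinset, (f₀.map (Polynomial.evalRingHom α)).leadingCoeff) ≠ 0 := by
  classical
  set s := c.roots.toFinset with hs
  set p : F → F[X] := fun α => f₀.map (Polynomial.evalRingHom α) with hp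
  have hne : ∀ α : F, p α ≠ 0 := by
    intro α h0
    have hev : ∀ j, Polynomial.eval α (f₀.coeff j) = 0 := by
      intro j
      have := congrArg (fun q => Polynomial.coeff q j) h0
      simpa [hp, Polynomial.coeff_map] using this
    have hdvd : ∀ j, (X - C α) ∣ f₀.coeff j := fun j =>
      Polynomial.dvd_iff_isRoot.2 (hev j)
    exact Polynomial.not_isUnit_X_sub_C α (hprim _ hdvd)
  have hleadne : ∀ α : F, (p α).leadingCoeff ≠ 0 := fun α =>
    Polynomial.leadingCoeff_ne_zero.2 (hne α)
  have hprodne : (∏ α ∈ s, (p α).leadingCoeff) ≠ 0 :=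
    Finset.prod_ne_zero_iff.2 fun α _ => hleadne α
  set z : Fin n := ⟨0, hn⟩ with hz
  set φ : MvPolynomial (Fin n) F →ₐ[F] F[X] :=
    MvPolynomial.aeval (fun i => if i = z then (Polynomial.X : F[X]) else 0) with hφ
  have hφgen : ∀ α : F, φ (genEval n α) = X + C (α ^ n) := by
    intro α
    simp only [genEval, map_add, map_sum, map_mul, hφ, MvPolynomial.aeval_C,
      MvPolynomial.aeval_X, Polynomial.algebraMap_eq]
    rw [Finset.sum_eq_single z]
    · have : ((z : Fin n) : ℕ) = 0 := rfl
      rw [if_pos rfl, this, pow_zero, map_one, one_mul, add_comm]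
    · intro b _ hb
      simp [hb]
    · simp
  have hφR : φ R = ∏ α ∈ s, (p α).comp (X + C (α ^ n)) := by
    rw [hR, map_prod]
    refine Finset.prod_congr rfl fun α _ => ?_
    rw [← Polynomial.aeval_algHom_apply, hφgen, Polynomial.comp_eq_aeval]
  have hcompdeg : ∀ α : F, ((p α).comp (X + C (α ^ n))).natDegree = (p α).natDegree := by
    intro α
    rw [Polynomial.natDegree_comp, Polynomial.natDegree_X_add_C, mul_one]
  have hcomplead : ∀ α : F,
      ((p α).comp (X + C (α ^ n))).leadingCoeff = (p α).leadingCoeff := by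
    intro α
    rw [Polynomial.leadingCoeff_comp (by rw [Polynomial.natDegree_X_add_C]; exact one_ne_zero)]
    rw [Polynomial.leadingCoeff_X_add_C, one_pow, mul_one]
  have hcompne : ∀ α : F, (p α).comp (X + C (α ^ n)) ≠ 0 := fun α h0 =>
    hleadne α (by rw [← hcomplead α, h0, Polynomial.leadingCoeff_zero])
  have hQdeg : (∏ α ∈ s, (p α).comp (X + C (α ^ n))).natDegree = L := by
    rw [Polynomial.natDegree_prod _ _ fun α _ => hcompne α, hL]
    exact Finset.sum_congr rfl fun α _ => hcompdeg α
  have hQlead : (∏ α ∈ s, (p α).comp (X + C (α ^ n))).leadingCoeff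
      = ∏ α ∈ s, (p α).leadingCoeff := by
    rw [Polynomial.leadingCoeff_prod]
    exact Finset.prod_congr rfl fun α _ => hcomplead α
  have hcoeff : MvPolynomial.coeff (Finsupp.single z L) R = ∏ α ∈ s, (p α).leadingCoeff := by
    rw [← aux_coeff_aeval z R L]
    change (φ R).coeff L = _
    rw [hφR, ← hQdeg, Polynomial.coeff_natDegree]
    exact hQlead
  have hle : R.totalDegree ≤ L := by
    rw [hR, hL]
    refine (MvPolynomial.totalDegree_finset_prod _ _).trans (Finset.sum_le_sum fun α _ => ?_)
    calc (Polynomial.aeval (genEval n α) (p α)).totalDegree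
        ≤ (p α).natDegree * (genEval n α).totalDegree := aux_totalDegree_aeval_le _ _
      _ ≤ (p α).natDegree * 1 := Nat.mul_le_mul_left _ (aux_totalDegree_genEval n α)
      _ = (p α).natDegree := mul_one _
  have hRne : R ≠ 0 := fun h0 => hprodne (by rw [← hcoeff, h0, MvPolynomial.coeff_zero])
  have hge : L ≤ R.totalDegree := by
    have hmem : Finsupp.single z L ∈ R.support :=
      MvPolynomial.mem_support_iff.2 (by rw [hcoeff]; exact hprodne)
    have := MvPolynomial.le_totalDegree hmem
    simpa using this
  have hLle : L ≤ c.natDegree * f₀.natDegree := by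
    rw [hL]
    calc ∑ α ∈ s, (p α).natDegree ≤ ∑ α ∈ s, f₀.natDegree :=
        Finset.sum_le_sum fun α _ => Polynomial.natDegree_map_le
      _ = s.card * f₀.natDegree := by rw [Finset.sum_const, smul_eq_mul]
      _ ≤ c.natDegree * f₀.natDegree := by
        refine Nat.mul_le_mul_right _ ?_
        rw [hs, Multiset.toFinset_card_of_nodup hnodup]
        exact Polynomial.card_roots' c
  exact ⟨hRne, le_antisymm hle hge, hLle, hcoeff, hprodne⟩
end

section
/- Let F be a field, and let f ∈ F[t][x] be separable over F(t), primitive, with x-degree d ≥ 1 and height h. Consider the map sending (a_0,…,a_{n−1}) ∈ F^n to disc_t(f(a(t),t)) where a(t) = a_0 + ⋯ + a_{n−1}t^{n−1} + t^n. This map is given by a polynomial in a_0,…,a_{n−1} of total degree at most 2(nd + h)d. -/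
open Polynomial

/-- The height of `f = Σ γ_j(t) x^j ∈ F[t][x]` is `max_j deg γ_j`. -/
noncomputable def polyHeight {F : Type*} [Field F] (f : Polynomial (Polynomial F)) : ℕ :=
  f.support.sup fun j => (f.coeff j).natDegree

/-- The Sylvester matrix of `p` and `q`, regarded as polynomials of degrees `m` and `n`. -/
noncomputable def sylvesterMatrix {R : Type*} [CommRing R] (m n : ℕ)
    (p q : Polynomial R) : Matrix (Fin (m + n)) (Fin (m + n)) R :=
  Matrix.of fun i j =>
    if (i : ℕ) < n then (if (i : ℕ) ≤ (j : ℕ) then p.coeff ((j : ℕ) - (i : ℕ)) else 0)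
    else (if (i : ℕ) - n ≤ (j : ℕ) then q.coeff ((j : ℕ) - ((i : ℕ) - n)) else 0)

/-- The resultant of `p` and `q` regarded as polynomials of degrees `m`, `n`. -/
noncomputable def resultantDeg {R : Type*} [CommRing R] (m n : ℕ)
    (p q : Polynomial R) : R :=
  (sylvesterMatrix m n p q).det

/-- The discriminant in `t` of `g ∈ F[t]`, regarded as a polynomial of degree `M`. -/
noncomputable def discT {F : Type*} [Field F] (M : ℕ) (g : Polynomial F) : F :=
  resultantDeg M (M - 1) g (Polynomial.derivative g)

/-- The monic polynomial `a(t) = a_0 + ⋯ + a_{n−1}t^{n−1} + t^n`. -/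
noncomputable def monicFromCoeffs {F : Type*} [Field F] {n : ℕ} (a : Fin n → F) :
    Polynomial F :=
  Polynomial.X ^ n + ∑ i : Fin n, Polynomial.C (a i) * Polynomial.X ^ (i : ℕ)


namespace Stmt15Aux

variable {F : Type*} [Field F] {σ : Type*}

/-- All coefficients have total degree at most `c`. -/
def CB (c : ℕ) (p : Polynomial (MvPolynomial σ F)) : Prop :=
  ∀ k, (p.coeff k).totalDegree ≤ c

lemma CB.mono {c c' : ℕ} {p : Polynomial (MvPolynomial σ F)} (h : CB c p) (hc : c ≤ c') :
    CB c' p := fun k => (h k).trans hc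

lemma CB.mul {c1 c2 : ℕ} {p q : Polynomial (MvPolynomial σ F)} (hp : CB c1 p) (hq : CB c2 q) :
    CB (c1 + c2) (p * q) := by
  intro k
  rw [Polynomial.coeff_mul]
  refine (MvPolynomial.totalDegree_finset_sum _ _).trans ?_
  refine Finset.sup_le fun x _ => ?_
  exact (MvPolynomial.totalDegree_mul _ _).trans (add_le_add (hp _) (hq _))

lemma CB.one : CB (F := F) (σ := σ) 0 1 := by
  intro k
  rw [Polynomial.coeff_one]
  split_ifs <;> simp

lemma CB.pow {p : Polynomial (MvPolynomial σ F)} (hp : CB 1 p) (j : ℕ) : CB j (p ^ j) := by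
  induction j with
  | zero => simpa using CB.one
  | succ m ih => rw [pow_succ]; exact ih.mul hp

end Stmt15Aux

namespace Stmt15Aux

lemma det_totalDegree_le {N : ℕ} {F : Type*} [Field F] {σ : Type*}
    (M : Matrix (Fin N) (Fin N) (MvPolynomial σ F)) (d : ℕ)
    (h : ∀ i j, (M i j).totalDegree ≤ d) :
    M.det.totalDegree ≤ N * d := by
  rw [Matrix.det_apply]
  refine (MvPolynomial.totalDegree_finset_sum _ _).trans ?_
  refine Finset.sup_le fun σ' _ => ?_
  have hprod : (∏ i, M (σ' i) i).totalDegree ≤ N * d := by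
    refine (MvPolynomial.totalDegree_finset_prod _ _).trans ?_
    calc ∑ i : Fin N, (M (σ' i) i).totalDegree ≤ ∑ _i : Fin N, d :=
          Finset.sum_le_sum fun i _ => h _ _
      _ = N * d := by simp [Finset.sum_const, Finset.card_univ]
  obtain h1 | h1 := Int.units_eq_one_or (Equiv.Perm.sign σ')
  · rw [h1, one_smul]; exact hprod
  · rw [h1]
    simpa [Units.smul_def] using hprod

end Stmt15Aux

namespace Stmt15Aux

variable {F : Type*} [Field F] {n : ℕ}

noncomputable def genA (n : ℕ) (F : Type*) [Field F] : Polynomial (MvPolynomial (Fin n) F) :=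
  Polynomial.X ^ n + ∑ i : Fin n, Polynomial.C (MvPolynomial.X i) * Polynomial.X ^ (i : ℕ)

lemma CB_genA : CB 1 (genA n F) := by
  intro k
  rw [genA, Polynomial.coeff_add]
  refine (MvPolynomial.totalDegree_add _ _).trans (max_le ?_ ?_)
  · rw [Polynomial.coeff_X_pow]
    split_ifs <;> simp
  · rw [Polynomial.finset_sum_coeff]
    refine (MvPolynomial.totalDegree_finset_sum _ _).trans (Finset.sup_le fun i _ => ?_)
    rw [Polynomial.coeff_C_mul, Polynomial.coeff_X_pow]
    split_ifs <;> simp [MvPolynomial.totalDegree_X]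

lemma CB_map (γ : Polynomial F) :
    CB 0 (γ.map (MvPolynomial.C : F →+* MvPolynomial (Fin n) F)) := by
  intro k; simp [Polynomial.coeff_map]

noncomputable def genG (f : Polynomial (Polynomial F)) (n : ℕ) :
    Polynomial (MvPolynomial (Fin n) F) :=
  f.eval₂ (Polynomial.mapRingHom (MvPolynomial.C : F →+* MvPolynomial (Fin n) F)) (genA n F)

lemma CB_genG (f : Polynomial (Polynomial F)) : CB f.natDegree (genG f n) := by
  intro k
  rw [genG, Polynomial.eval₂_eq_sum, Polynomial.sum, Polynomial.finset_sum_coeff]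
  refine (MvPolynomial.totalDegree_finset_sum _ _).trans (Finset.sup_le fun e he => ?_)
  have h1 : CB (0 + e) (Polynomial.mapRingHom (MvPolynomial.C : F →+* MvPolynomial (Fin n) F)
      (f.coeff e) * (genA n F) ^ e) :=
    (CB_map _).mul (CB_genA.pow e)
  exact (h1 k).trans (by simpa using Polynomial.le_natDegree_of_mem_supp e he)

lemma CB_derivative {c : ℕ} {p : Polynomial (MvPolynomial (Fin n) F)} (hp : CB c p) :
    CB c (Polynomial.derivative p) := by
  intro k
  rw [Polynomial.coeff_derivative]
  refine (MvPolynomial.totalDegree_mul _ _).trans ?_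
  have h2 : ((k : MvPolynomial (Fin n) F) + 1).totalDegree = 0 := by
    have : ((k : MvPolynomial (Fin n) F) + 1) = MvPolynomial.C ((k : F) + 1) := by
      rw [map_add, MvPolynomial.C_eq_coe_nat, map_one]
    rw [this, MvPolynomial.totalDegree_C]
  simp [h2, hp (k + 1)]

end Stmt15Aux

open Stmt15Aux

/-- For `f ∈ F[t][x]` separable over `F(t)`, primitive, of `x`-degree `d ≥ 1` and
height `h`, the map `(a_0,…,a_{n−1}) ↦ disc_t f(a(t),t)` is given by a polynomial in
`a_0,…,a_{n−1}` of total degree at most `2(nd + h)d`. -/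
theorem stmt_15 {F : Type*} [Field F] (f : Polynomial (Polynomial F))
    (hsep : (f.map (algebraMap (Polynomial F) (RatFunc F))).Separable)
    (hprim : ∀ e : Polynomial F, (∀ j, e ∣ f.coeff j) → IsUnit e)
    (d h n : ℕ) (hd : f.natDegree = d) (hd1 : 1 ≤ d) (hh : polyHeight f = h) :
    ∃ P : MvPolynomial (Fin n) F,
      P.totalDegree ≤ 2 * (n * d + h) * d ∧
      ∀ a : Fin n → F,
        MvPolynomial.eval a P = discT (n * d + h) (f.eval (monicFromCoeffs a)) := by
  set M : ℕ := n * d + h with hM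
  set G : Polynomial (MvPolynomial (Fin n) F) := genG f n with hG
  have hCBG : CB d G := hd ▸ CB_genG f
  have hCBG' : CB d (Polynomial.derivative G) := CB_derivative hCBG
  refine ⟨resultantDeg M (M - 1) G (Polynomial.derivative G), ?_, ?_⟩
  · rw [resultantDeg]
    refine (det_totalDegree_le _ d ?_).trans ?_
    · intro i j
      simp only [sylvesterMatrix, Matrix.of_apply]
      split_ifs <;> first | exact hCBG _ | exact hCBG' _ | simp
    · have : M + (M - 1) ≤ 2 * M := by omega
      calc (M + (M - 1)) * d ≤ 2 * M * d := Nat.mul_le_mul_right d this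
        _ = 2 * (n * d + h) * d := by rw [hM]
  · intro a
    have hGmap : G.map (MvPolynomial.eval a) = f.eval (monicFromCoeffs a) := by
      have h1 : (MvPolynomial.eval a).comp (MvPolynomial.C : F →+* MvPolynomial (Fin n) F)
          = RingHom.id F := by ext x; simp
      have h2 : Polynomial.mapRingHom (MvPolynomial.eval a) (genA n F) = monicFromCoeffs a := by
        simp [genA, monicFromCoeffs, Polynomial.map_sum]
      rw [← Polynomial.coe_mapRingHom, hG, genG, Polynomial.hom_eval₂,
        Polynomial.mapRingHom_comp, h1, h2, Polynomial.mapRingHom_id]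
      rfl
    have hGmap' : (Polynomial.derivative G).map (MvPolynomial.eval a)
        = Polynomial.derivative (f.eval (monicFromCoeffs a)) := by
      rw [← hGmap, Polynomial.derivative_map]
    rw [discT, resultantDeg, resultantDeg, RingHom.map_det]
    congr 1
    ext i j
    simp only [RingHom.mapMatrix_apply, sylvesterMatrix, Matrix.map_apply, Matrix.of_apply]
    split_ifs <;>
      simp only [← hGmap, Polynomial.derivative_map, Polynomial.coeff_map, map_zero]
end
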